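/- Suppose that for every u ∈ U and every v ∈ V there exists a coordinate c with u[c] = v[c] = w[c] = 1. Then in the eccentricity-construction graph G_ecc, for every u ∈ U the vertex u^a has eccentricity at most 3a+2; that is, for every vertex z of G_ecc there is a walk between u^a and z of length at most 3a+2. -/

import Mathlib

/-!
Eccentricities lower-bound construction (Theorem 3.3, "yes" case): if every `u ∈ U`
and `v ∈ V` share a coordinate `c` with `u[c] = v[c] = w[c] = 1`, then in the
eccentricity-construction graph `G_ecc` every vertex `u^a` (`u ∈ U`) has
eccentricity at most `3a+2`: every vertex is joined to `u^a` by a walk of length at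
most `3a+2`.
-/

namespace EccConstr

variable {B P : Type*}

/-- Vertices of a graph assembled from base vertices `B` and, for each path request
`p : P` of length `L p`, the `L p - 1` internal vertices of the path. -/
abbrev Vert (B P : Type*) (L : P → ℕ) : Type _ := B ⊕ (Σ p : P, Fin (L p - 1))

/-- `pos e0 e1 L p i z` : `z` is the `i`-th vertex along the path `p`
(whose endpoints are `e0 p` and `e1 p` and whose length is `L p`). -/
def pos (e0 e1 : P → B) (L : P → ℕ) (p : P) (i : ℕ) (z : Vert B P L) : Prop :=
  (i = 0 ∧ z = Sum.inl (e0 p)) ∨ (i = L p ∧ z = Sum.inl (e1 p)) ∨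
    (∃ h : i - 1 < L p - 1, 0 < i ∧ i < L p ∧ z = Sum.inr ⟨p, ⟨i - 1, h⟩⟩)

/-- The graph obtained from the base vertex set `B` by adding, for each `p : P`, an
internally vertex-disjoint path of length `L p` between the vertices `e0 p` and
`e1 p` (for `L p = 1` this is just an edge). -/
def pathGraph (e0 e1 : P → B) (L : P → ℕ) : SimpleGraph (Vert B P L) where
  Adj x y := x ≠ y ∧ ∃ p i, i < L p ∧
    ((pos e0 e1 L p i x ∧ pos e0 e1 L p (i + 1) y) ∨
     (pos e0 e1 L p i y ∧ pos e0 e1 L p (i + 1) x))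
  symm := by
    constructor
    rintro x y ⟨hne, p, i, hi, h⟩
    exact ⟨hne.symm, p, i, hi, h.symm⟩
  loopless := ⟨fun x h => h.1 rfl⟩


section Aux
variable {f0 f1 : P → B} {L : P → ℕ}

/-- The canonical vertex at position `i` along path `p`. -/
def vtx (f0 f1 : P → B) (L : P → ℕ) (p : P) (i : ℕ) : Vert B P L :=
  if h : 0 < i ∧ i < L p then Sum.inr ⟨p, ⟨i - 1, by omega⟩⟩
  else if i = 0 then Sum.inl (f0 p) else Sum.inl (f1 p)

lemma vtx_zero (p : P) : vtx f0 f1 L p 0 = Sum.inl (f0 p) := by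
  simp [vtx]

lemma vtx_last (p : P) (hL : 1 ≤ L p) : vtx f0 f1 L p (L p) = Sum.inl (f1 p) := by
  unfold vtx
  split_ifs with h1 h2 <;> first | omega | rfl

lemma vtx_inr (p : P) (j : Fin (L p - 1)) :
    vtx f0 f1 L p (j.1 + 1) = Sum.inr ⟨p, j⟩ := by
  have hj := j.2
  unfold vtx
  split_ifs with h1 h2 <;> try omega
  simp

lemma pos_vtx (p : P) {i : ℕ} (hi : i ≤ L p) : pos f0 f1 L p i (vtx f0 f1 L p i) := by
  unfold vtx pos
  split_ifs with h1 h2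
  · exact Or.inr (Or.inr ⟨by omega, h1.1, h1.2, rfl⟩)
  · exact Or.inl ⟨h2, rfl⟩
  · exact Or.inr (Or.inl ⟨by omega, rfl⟩)

lemma vtx_ne (p : P) (hne : f0 p ≠ f1 p) {i : ℕ} (hi : i < L p) :
    vtx f0 f1 L p i ≠ vtx f0 f1 L p (i + 1) := by
  unfold vtx
  split_ifs with h1 h2 h3 h4 <;>
    simp_all [Sum.inr.injEq, Sigma.mk.inj_iff, Fin.ext_iff] <;> omega

lemma adj_vtx (p : P) (hne : f0 p ≠ f1 p) {i : ℕ} (hi : i < L p) :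
    (pathGraph f0 f1 L).Adj (vtx f0 f1 L p i) (vtx f0 f1 L p (i + 1)) := by
  show _ ≠ _ ∧ _
  exact ⟨vtx_ne p hne hi, p, i, hi, Or.inl ⟨pos_vtx p hi.le, pos_vtx p hi⟩⟩

lemma seg (p : P) (hne : f0 p ≠ f1 p) :
    ∀ j, j ≤ L p → ∀ i, i ≤ j →
      ∃ w : (pathGraph f0 f1 L).Walk (vtx f0 f1 L p i) (vtx f0 f1 L p j),
        w.length = j - i := by
  intro j
  induction j with
  | zero =>
    intro _ i hi
    obtain rfl : i = 0 := by omega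
    exact ⟨SimpleGraph.Walk.nil, rfl⟩
  | succ j ih =>
    intro hj i hi
    rcases Nat.lt_or_ge i (j + 1) with h | h
    · obtain ⟨w, hw⟩ := ih (by omega) i (by omega)
      refine ⟨w.concat (adj_vtx p hne (by omega : j < L p)), ?_⟩
      rw [SimpleGraph.Walk.length_concat, hw]; omega
    · obtain rfl : i = j + 1 := by omega
      exact ⟨SimpleGraph.Walk.nil, by simp⟩

end Aux

/-- Base (named) vertices of the eccentricity-construction graph `G_ecc`. -/
inductive Base (ℓ : ℕ) (U V : Set (Fin ℓ → Bool)) : Type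
  | cU (c : Fin ℓ)
  | cV (c : Fin ℓ)
  | u0 (u : U)
  | ua (u : U)
  | v0 (v : V)
  | va (v : V)
  | x

/-- Path requests of the eccentricity-construction graph `G_ecc`. -/
inductive Pth (ℓ : ℕ) (U V : Set (Fin ℓ → Bool)) (w : Fin ℓ → Bool) : Type
  | upath (u : U)                                      -- u^0 … u^a, length a
  | vpath (v : V)                                      -- v^0 … v^a, length a
  | uc (u : U) (c : Fin ℓ) (h : u.1 c = true)          -- u^a — c_U, length a
  | vc (v : V) (c : Fin ℓ) (h : v.1 c = true)          -- c_V — v^0, length a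
  | wc (c : Fin ℓ) (h : w c = true)                    -- edge c_U — c_V
  | xu (u : U)                                         -- edge x — u^0

variable {ℓ : ℕ} {U V : Set (Fin ℓ → Bool)} {w : Fin ℓ → Bool}

/-- First endpoint of each path request. -/
def e0 : Pth ℓ U V w → Base ℓ U V
  | .upath u => .u0 u
  | .vpath v => .v0 v
  | .uc u _ _ => .ua u
  | .vc _ c _ => .cV c
  | .wc c _ => .cU c
  | .xu _ => .x

/-- Second endpoint of each path request. -/
def e1 : Pth ℓ U V w → Base ℓ U V
  | .upath u => .ua u
  | .vpath v => .va v
  | .uc _ c _ => .cU c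
  | .vc v _ _ => .v0 v
  | .wc c _ => .cV c
  | .xu u => .u0 u

/-- Length of each path request: the `c_U — c_V` connections and the `x — u^0`
connections are single edges, all other paths have length `a`. -/
def len (a : ℕ) : Pth ℓ U V w → ℕ
  | .wc _ _ => 1
  | .xu _ => 1
  | _ => a

/-- The eccentricity-construction graph `G_ecc`. -/
def Gecc (a ℓ : ℕ) (U V : Set (Fin ℓ → Bool)) (w : Fin ℓ → Bool) :
    SimpleGraph (Vert (Base ℓ U V) (Pth ℓ U V w) (len a)) :=
  pathGraph e0 e1 (len a)

end EccConstr

open EccConstr in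
theorem eccentricity_construction_yes_case
    (a ℓ : ℕ) (ha : 0 < a) (hℓ : 0 < ℓ)
    (U V : Set (Fin ℓ → Bool)) (hUfin : U.Finite) (hVfin : V.Finite)
    (hU : U.Nonempty) (hV : V.Nonempty) (w : Fin ℓ → Bool)
    (hUone : ∀ u ∈ U, ∃ c, u c = true) (hVone : ∀ v ∈ V, ∃ c, v c = true)
    (hUcov : ∀ c : Fin ℓ, ∃ u ∈ U, u c = true)
    (hVcov : ∀ c : Fin ℓ, ∃ v ∈ V, v c = true)
    (hyes : ∀ u ∈ U, ∀ v ∈ V, ∃ c, u c = true ∧ v c = true ∧ w c = true) :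
    ∀ (u : Fin ℓ → Bool) (hu : u ∈ U),
      ∀ z : Vert (Base ℓ U V) (Pth ℓ U V w) (len a),
        ∃ p : (Gecc a ℓ U V w).Walk (Sum.inl (Base.ua ⟨u, hu⟩)) z,
          p.length ≤ 3 * a + 2 := by
  intro u hu z
  have hne : ∀ p : Pth ℓ U V w, e0 p ≠ e1 p := by
    intro p; cases p <;> simp [e0, e1]
  have hL : ∀ p : Pth ℓ U V w, 1 ≤ len a p := by
    intro p; cases p <;> simp only [len] <;> omega
  have hSne : ∀ p : Pth ℓ U V w,
      (Sum.inl (e0 p) : Vert (Base ℓ U V) (Pth ℓ U V w) (len a)) ≠ Sum.inl (e1 p) := by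
    intro p hcontra
    exact hne p (Sum.inl_injective hcontra)
  have hpath : ∀ p : Pth ℓ U V w,
      ∃ wk : (Gecc a ℓ U V w).Walk (Sum.inl (e0 p)) (Sum.inl (e1 p)),
        wk.length ≤ len a p := by
    intro p
    obtain ⟨wk, hwk⟩ := seg (L := len a) p (hne p) (len a p) le_rfl 0 (Nat.zero_le _)
    exact ⟨wk.copy (vtx_zero p) (vtx_last p (hL p)),
      (SimpleGraph.Walk.length_copy ..).trans_le (hwk.trans_le (by omega))⟩
  have comp : ∀ {x y z' : Vert (Base ℓ U V) (Pth ℓ U V w) (len a)} {m n : ℕ},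
      (∃ wk : (Gecc a ℓ U V w).Walk x y, wk.length ≤ m) →
      (∃ wk : (Gecc a ℓ U V w).Walk y z', wk.length ≤ n) →
      ∃ wk : (Gecc a ℓ U V w).Walk x z', wk.length ≤ m + n := by
    intro x y z' m n h1 h2
    obtain ⟨w1, hw1⟩ := h1
    obtain ⟨w2, hw2⟩ := h2
    exact ⟨w1.append w2, by rw [SimpleGraph.Walk.length_append]; omega⟩
  have rev : ∀ {x y : Vert (Base ℓ U V) (Pth ℓ U V w) (len a)} {m : ℕ},
      (∃ wk : (Gecc a ℓ U V w).Walk x y, wk.length ≤ m) →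
      ∃ wk : (Gecc a ℓ U V w).Walk y x, wk.length ≤ m := by
    intro x y m h1
    obtain ⟨w1, hw1⟩ := h1
    exact ⟨w1.reverse, by rwa [SimpleGraph.Walk.length_reverse]⟩
  have weak : ∀ {x y : Vert (Base ℓ U V) (Pth ℓ U V w) (len a)} {m n : ℕ}, m ≤ n →
      (∃ wk : (Gecc a ℓ U V w).Walk x y, wk.length ≤ m) →
      ∃ wk : (Gecc a ℓ U V w).Walk x y, wk.length ≤ n := by
    intro x y m n hmn h1
    obtain ⟨w1, hw1⟩ := h1
    exact ⟨w1, hw1.trans hmn⟩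
  set uu : U := ⟨u, hu⟩ with huu
  -- specialized path walks
  have hUP : ∀ u' : U, ∃ wk : (Gecc a ℓ U V w).Walk
      (Sum.inl (Base.u0 u')) (Sum.inl (Base.ua u')), wk.length ≤ a :=
    fun u' => hpath (.upath u')
  have hVP : ∀ v' : V, ∃ wk : (Gecc a ℓ U V w).Walk
      (Sum.inl (Base.v0 v')) (Sum.inl (Base.va v')), wk.length ≤ a :=
    fun v' => hpath (.vpath v')
  have hUC : ∀ (u' : U) (c : Fin ℓ) (h : u'.1 c = true),
      ∃ wk : (Gecc a ℓ U V w).Walk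
        (Sum.inl (Base.ua u')) (Sum.inl (Base.cU c)), wk.length ≤ a :=
    fun u' c h => hpath (.uc u' c h)
  have hVC : ∀ (v' : V) (c : Fin ℓ) (h : v'.1 c = true),
      ∃ wk : (Gecc a ℓ U V w).Walk
        (Sum.inl (Base.cV c)) (Sum.inl (Base.v0 v')), wk.length ≤ a :=
    fun v' c h => hpath (.vc v' c h)
  have hWC : ∀ (c : Fin ℓ) (h : w c = true),
      ∃ wk : (Gecc a ℓ U V w).Walk
        (Sum.inl (Base.cU c)) (Sum.inl (Base.cV c)), wk.length ≤ 1 :=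
    fun c h => hpath (.wc c h)
  have hXU : ∀ u' : U, ∃ wk : (Gecc a ℓ U V w).Walk
      (Sum.inl Base.x) (Sum.inl (Base.u0 u')), wk.length ≤ 1 :=
    fun u' => hpath (.xu u')
  -- distances from S = u^a to the base vertices
  have t_u0self : ∃ wk : (Gecc a ℓ U V w).Walk
      (Sum.inl (Base.ua uu)) (Sum.inl (Base.u0 uu)), wk.length ≤ a :=
    rev (hUP uu)
  have t_x : ∃ wk : (Gecc a ℓ U V w).Walk
      (Sum.inl (Base.ua uu)) (Sum.inl Base.x), wk.length ≤ a + 1 :=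
    comp t_u0self (rev (hXU uu))
  have t_u0 : ∀ u' : U, ∃ wk : (Gecc a ℓ U V w).Walk
      (Sum.inl (Base.ua uu)) (Sum.inl (Base.u0 u')), wk.length ≤ a + 1 + 1 :=
    fun u' => comp t_x (hXU u')
  have t_ua : ∀ u' : U, ∃ wk : (Gecc a ℓ U V w).Walk
      (Sum.inl (Base.ua uu)) (Sum.inl (Base.ua u')), wk.length ≤ a + 1 + 1 + a :=
    fun u' => comp (t_u0 u') (hUP u')
  have t_v0 : ∀ v' : V, ∃ wk : (Gecc a ℓ U V w).Walk
      (Sum.inl (Base.ua uu)) (Sum.inl (Base.v0 v')), wk.length ≤ a + 1 + a := by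
    intro v'
    obtain ⟨c, huc, hvc, hwc⟩ := hyes u hu v'.1 v'.2
    exact comp (comp (hUC uu c huc) (hWC c hwc)) (hVC v' c hvc)
  have t_va : ∀ v' : V, ∃ wk : (Gecc a ℓ U V w).Walk
      (Sum.inl (Base.ua uu)) (Sum.inl (Base.va v')), wk.length ≤ a + 1 + a + a :=
    fun v' => comp (t_v0 v') (hVP v')
  have t_cU : ∀ c : Fin ℓ, ∃ wk : (Gecc a ℓ U V w).Walk
      (Sum.inl (Base.ua uu)) (Sum.inl (Base.cU c)), wk.length ≤ a + 1 + 1 + a + a := by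
    intro c
    obtain ⟨u', hu', huc⟩ := hUcov c
    exact comp (t_ua ⟨u', hu'⟩) (hUC ⟨u', hu'⟩ c huc)
  have t_cV : ∀ c : Fin ℓ, ∃ wk : (Gecc a ℓ U V w).Walk
      (Sum.inl (Base.ua uu)) (Sum.inl (Base.cV c)), wk.length ≤ a + 1 + a + a := by
    intro c
    obtain ⟨v', hv', hvc⟩ := hVcov c
    exact comp (t_v0 ⟨v', hv'⟩) (rev (hVC ⟨v', hv'⟩ c hvc))
  rcases z with b | ⟨p, j⟩
  · cases b with
    | cU c => exact weak (by omega) (t_cU c)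
    | cV c => exact weak (by omega) (t_cV c)
    | u0 u' => exact weak (by omega) (t_u0 u')
    | ua u' => exact weak (by omega) (t_ua u')
    | v0 v' => exact weak (by omega) (t_v0 v')
    | va v' => exact weak (by omega) (t_va v')
    | x => exact weak (by omega) t_x
  · -- interior vertex of path p at index j
    have fromE0 : ∀ (q : Pth ℓ U V w) (k : Fin (len a q - 1)),
        ∃ wk : (Gecc a ℓ U V w).Walk (Sum.inl (e0 q)) (Sum.inr ⟨q, k⟩),
          wk.length ≤ len a q - 1 := by
      intro q k
      have hk := k.2
      obtain ⟨wk, hwk⟩ := seg (L := len a) q (hne q) (k.1 + 1) (by omega) 0 (Nat.zero_le _)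
      exact ⟨wk.copy (vtx_zero q) (vtx_inr q k),
        (SimpleGraph.Walk.length_copy ..).trans_le (hwk.trans_le (by omega))⟩
    have toE1 : ∀ (q : Pth ℓ U V w) (k : Fin (len a q - 1)),
        ∃ wk : (Gecc a ℓ U V w).Walk (Sum.inr ⟨q, k⟩) (Sum.inl (e1 q)),
          wk.length ≤ len a q - 1 := by
      intro q k
      have hk := k.2
      obtain ⟨wk, hwk⟩ := seg (L := len a) q (hne q) (len a q) le_rfl (k.1 + 1) (by omega)
      exact ⟨wk.copy (vtx_inr q k) (vtx_last q (hL q)),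
        (SimpleGraph.Walk.length_copy ..).trans_le (hwk.trans_le (by omega))⟩
    cases p with
    | upath u' =>
      have h1 : ∃ wk : (Gecc a ℓ U V w).Walk
          (Sum.inl (Base.u0 u')) (Sum.inr ⟨Pth.upath u', j⟩), wk.length ≤ a - 1 :=
        fromE0 (.upath u') j
      exact weak (by omega) (comp (t_u0 u') h1)
    | vpath v' =>
      have h1 : ∃ wk : (Gecc a ℓ U V w).Walk
          (Sum.inl (Base.v0 v')) (Sum.inr ⟨Pth.vpath v', j⟩), wk.length ≤ a - 1 :=
        fromE0 (.vpath v') j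
      exact weak (by omega) (comp (t_v0 v') h1)
    | uc u' c h =>
      have h1 : ∃ wk : (Gecc a ℓ U V w).Walk
          (Sum.inl (Base.ua u')) (Sum.inr ⟨Pth.uc u' c h, j⟩), wk.length ≤ a - 1 :=
        fromE0 (.uc u' c h) j
      exact weak (by omega) (comp (t_ua u') h1)
    | vc v' c h =>
      have h1 : ∃ wk : (Gecc a ℓ U V w).Walk
          (Sum.inr ⟨Pth.vc v' c h, j⟩) (Sum.inl (Base.v0 v')), wk.length ≤ a - 1 :=
        toE1 (.vc v' c h) j
      exact weak (by omega) (comp (t_v0 v') (rev h1))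
    | wc c h => exact (Nat.not_lt_zero _ j.2).elim
    | xu u' => exact (Nat.not_lt_zero _ j.2).elim
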